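/- Equivalence for the shifted Orlicz function: let φ satisfy condition (C3). Then there exist constants c, C > 0, depending only on the characteristics of φ, such that for all a, b ∈ ℝ^d with (a,b) ≠ (0,0): c · (φ'(|a| + |b|)/(|a| + |b|)) · |a − b|² ≤ φ_{|a|}(|a − b|) ≤ C · (φ'(|a| + |b|)/(|a| + |b|)) · |a − b|². -/

import Mathlib

open RealInnerProductSpace

/-- The shifted Orlicz function `φ_α(t) = ∫₀^t φ'(α+s) s/(α+s) ds`, expressed in
terms of the derivative `φ'` of `φ`. -/
noncomputable def phiShift (φ' : ℝ → ℝ) (α t : ℝ) : ℝ :=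
  ∫ s in (0:ℝ)..t, φ' (α + s) * s / (α + s)

open Classical in
/-- The Orlicz operator `A(a) = (φ'(|a|)/|a|) a` (with `A(0) = 0`). -/
noncomputable def opA (φ' : ℝ → ℝ) {d : ℕ} (a : EuclideanSpace ℝ (Fin d)) :
    EuclideanSpace ℝ (Fin d) :=
  if a = 0 then 0 else (φ' ‖a‖ / ‖a‖) • a

/-- The convex conjugate `φ*(r) = sup_{s ≥ 0} (rs − φ(s))`. -/
noncomputable def orliczConj (φ : ℝ → ℝ) (r : ℝ) : ℝ :=
  sSup ((fun s => r * s - φ s) '' Set.Ici 0)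

/-- If `p * φ' s ≤ φ'' s * s` on `(0,∞)` then `s ↦ φ' s * s^(-p)` is increasing there. -/
lemma powmul_mono (φ' φ'' : ℝ → ℝ) (p : ℝ)
    (hd2 : ∀ s ∈ Set.Ioi (0:ℝ), HasDerivAt φ' (φ'' s) s)
    (hle : ∀ s ∈ Set.Ioi (0:ℝ), p * φ' s ≤ φ'' s * s)
    {x y : ℝ} (hx : 0 < x) (hxy : x ≤ y) :
    φ' x * x ^ (-p) ≤ φ' y * y ^ (-p) := by
  have key : MonotoneOn (fun s => φ' s * s ^ (-p)) (Set.Icc x y) := by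
    apply monotoneOn_of_hasDerivWithinAt_nonneg (f' := fun s =>
      s ^ (-p - 1) * (φ'' s * s - p * φ' s)) (convex_Icc x y)
    · intro s hs
      have hs0 : 0 < s := lt_of_lt_of_le hx hs.1
      have hF : HasDerivAt (fun s => φ' s * s ^ (-p))
          (φ'' s * s ^ (-p) + φ' s * (-p * s ^ (-p - 1))) s :=
        (hd2 s hs0).mul (Real.hasDerivAt_rpow_const (Or.inl hs0.ne'))
      exact hF.continuousAt.continuousWithinAt
    · intro s hs
      rw [interior_Icc] at hs
      have hs0 : 0 < s := lt_of_lt_of_le hx hs.1.le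
      have hF : HasDerivAt (fun s => φ' s * s ^ (-p))
          (φ'' s * s ^ (-p) + φ' s * (-p * s ^ (-p - 1))) s :=
        (hd2 s hs0).mul (Real.hasDerivAt_rpow_const (Or.inl hs0.ne'))
      have heq : φ'' s * s ^ (-p) + φ' s * (-p * s ^ (-p - 1))
          = s ^ (-p - 1) * (φ'' s * s - p * φ' s) := by
        have : s ^ (-p) = s ^ (-p - 1) * s := by
          rw [← Real.rpow_add_one hs0.ne']; ring_nf
        rw [this]; ring
      exact (heq ▸ hF).hasDerivWithinAt
    · intro s hs
      rw [interior_Icc] at hs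
      have hs0 : 0 < s := lt_of_lt_of_le hx hs.1.le
      have h1 : (0:ℝ) < s ^ (-p - 1) := Real.rpow_pos_of_pos hs0 _
      have h2 := hle s hs0
      nlinarith
  exact key (Set.left_mem_Icc.2 hxy) (Set.right_mem_Icc.2 hxy) hxy

lemma powmul_anti (φ' φ'' : ℝ → ℝ) (p : ℝ)
    (hd2 : ∀ s ∈ Set.Ioi (0:ℝ), HasDerivAt φ' (φ'' s) s)
    (hle : ∀ s ∈ Set.Ioi (0:ℝ), φ'' s * s ≤ p * φ' s)
    {x y : ℝ} (hx : 0 < x) (hxy : x ≤ y) :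
    φ' y * y ^ (-p) ≤ φ' x * x ^ (-p) := by
  have := powmul_mono (fun s => -φ' s) (fun s => -φ'' s) p
    (fun s hs => (hd2 s hs).neg) (fun s hs => by have := hle s hs; ring_nf; linarith)
    hx hxy
  simp only [neg_mul] at this
  linarith

/-- Nonnegativity of `φ'`. -/
lemma phi'_nonneg (φ φ' φ'' : ℝ → ℝ) (c₀ : ℝ)
    (hcont : ContinuousOn φ (Set.Ici 0))
    (hd1 : ∀ s ∈ Set.Ioi (0:ℝ), HasDerivAt φ (φ' s) s)
    (hd2 : ∀ s ∈ Set.Ioi (0:ℝ), HasDerivAt φ' (φ'' s) s)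
    (hpos : ∀ s ∈ Set.Ioi (0:ℝ), 0 < φ s)
    (hφ0 : φ 0 = 0)
    (hle : ∀ s ∈ Set.Ioi (0:ℝ), c₀ * φ' s ≤ φ'' s * s) :
    ∀ s ∈ Set.Ioi (0:ℝ), 0 ≤ φ' s := by
  by_contra h
  push_neg at h
  obtain ⟨s₀, hs₀, hneg⟩ := h
  rw [Set.mem_Ioi] at hs₀
  have hnegall : ∀ s, 0 < s → s ≤ s₀ → φ' s < 0 := by
    intro s hs hss
    have := powmul_mono φ' φ'' c₀ hd2 hle hs hss
    have h1 : (0:ℝ) < s ^ (-c₀) := Real.rpow_pos_of_pos hs _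
    have h2 : (0:ℝ) < s₀ ^ (-c₀) := Real.rpow_pos_of_pos hs₀ _
    nlinarith
  have hdec : ∀ ε ∈ Set.Ioo (0:ℝ) s₀, φ s₀ ≤ φ ε := by
    intro ε hε
    obtain ⟨ξ, hξ, hslope⟩ := exists_hasDerivAt_eq_slope φ φ' hε.2
      (fun x hx => (hd1 x (lt_of_lt_of_le hε.1 hx.1)).continuousAt.continuousWithinAt)
      (fun x hx => hd1 x (hε.1.trans hx.1))
    have hξneg : φ' ξ < 0 := hnegall ξ (hε.1.trans hξ.1) hξ.2.le
    rw [hslope] at hξneg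
    have hd : s₀ - ε > 0 := by linarith [hε.2]
    rcases div_neg_iff.mp hξneg with ⟨h1, _⟩ | ⟨_, h2⟩ <;> linarith
  have htend : Filter.Tendsto φ (nhdsWithin 0 (Set.Ioi 0)) (nhds 0) := by
    have := (hcont 0 Set.self_mem_Ici)
    rw [ContinuousWithinAt, hφ0] at this
    exact this.mono_left (nhdsWithin_mono 0 Set.Ioi_subset_Ici_self)
  have : φ s₀ ≤ 0 := by
    refine ge_of_tendsto htend ?_
    filter_upwards [Ioo_mem_nhdsGT_of_mem (Set.left_mem_Ico.2 hs₀)] with ε hε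
    exact hdec ε hε
  linarith [hpos s₀ hs₀]

/-- Doubling for `φ'`. -/
lemma phi'_doubling (φ' φ'' : ℝ → ℝ) (C₀ : ℝ)
    (hd2 : ∀ s ∈ Set.Ioi (0:ℝ), HasDerivAt φ' (φ'' s) s)
    (hle : ∀ s ∈ Set.Ioi (0:ℝ), φ'' s * s ≤ C₀ * φ' s)
    {r : ℝ} (hr : 0 < r) : φ' (2 * r) ≤ 2 ^ C₀ * φ' r := by
  have h := powmul_anti φ' φ'' C₀ hd2 hle hr (by linarith : r ≤ 2 * r)
  have h2r : (0:ℝ) < 2 * r := by linarith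
  have hpow : (0:ℝ) < (2 * r) ^ C₀ := Real.rpow_pos_of_pos h2r _
  have hmul := mul_le_mul_of_nonneg_left h hpow.le
  have e1 : (2 * r) ^ C₀ * (φ' (2 * r) * (2 * r) ^ (-C₀)) = φ' (2 * r) := by
    rw [mul_comm ((2*r) ^ C₀), mul_assoc, ← Real.rpow_add h2r]
    simp
  have e2 : (2 * r) ^ C₀ * (φ' r * r ^ (-C₀)) = 2 ^ C₀ * φ' r := by
    rw [Real.mul_rpow (by norm_num) hr.le]
    have h3 : r ^ C₀ * r ^ (-C₀) = 1 := by rw [← Real.rpow_add hr]; simp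
    linear_combination (2 ^ C₀ * φ' r) * h3
  rw [e1, e2] at hmul
  exact hmul

theorem stmt14 (d : ℕ) (hd : 1 ≤ d) (φ φ' φ'' : ℝ → ℝ) (c₀ C₀ : ℝ)
    (hc₀ : 0 < c₀) (hC₀ : 0 < C₀)
    (hcont : ContinuousOn φ (Set.Ici 0))
    (hd1 : ∀ s ∈ Set.Ioi (0:ℝ), HasDerivAt φ (φ' s) s)
    (hd2 : ∀ s ∈ Set.Ioi (0:ℝ), HasDerivAt φ' (φ'' s) s)
    (hd2c : ContinuousOn φ'' (Set.Ioi 0))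
    (hconv : ConvexOn ℝ (Set.Ioi 0) φ)
    (hpos : ∀ s ∈ Set.Ioi (0:ℝ), 0 < φ s)
    (hφ0 : φ 0 = 0)
    (hlim0 : Filter.Tendsto (fun s => φ s / s) (nhdsWithin 0 (Set.Ioi 0)) (nhds 0))
    (hliminfty : Filter.Tendsto (fun s => φ s / s) Filter.atTop Filter.atTop)
    (hΔ2 : ∀ s ≥ (0:ℝ), φ (2 * s) ≤ C₀ * φ s)
    (hΔ2conj : ∀ r ≥ (0:ℝ), orliczConj φ (2 * r) ≤ C₀ * orliczConj φ r)
    (hφ'' : ∀ s ∈ Set.Ioi (0:ℝ), c₀ * φ' s ≤ φ'' s * s ∧ φ'' s * s ≤ C₀ * φ' s) :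
    ∃ c C : ℝ, 0 < c ∧ 0 < C ∧ ∀ a b : EuclideanSpace ℝ (Fin d),
      ¬(a = 0 ∧ b = 0) →
      c * (φ' (‖a‖ + ‖b‖) / (‖a‖ + ‖b‖)) * ‖a - b‖^2 ≤ phiShift φ' ‖a‖ ‖a - b‖ ∧
      phiShift φ' ‖a‖ ‖a - b‖ ≤ C * (φ' (‖a‖ + ‖b‖) / (‖a‖ + ‖b‖)) * ‖a - b‖^2 := by
  classical
  set K := (2:ℝ) ^ C₀ with hKdef
  have hK : 0 < K := Real.rpow_pos_of_pos (by norm_num) _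
  have hsign : ∀ s ∈ Set.Ioi (0:ℝ), 0 ≤ φ' s :=
    phi'_nonneg φ φ' φ'' c₀ hcont hd1 hd2 hpos hφ0 (fun s hs => (hφ'' s hs).1)
  have hmono : ∀ x y : ℝ, 0 < x → x ≤ y → φ' x ≤ φ' y := by
    intro x y hx hxy
    have key : MonotoneOn φ' (Set.Icc x y) := by
      apply monotoneOn_of_hasDerivWithinAt_nonneg (f' := φ'') (convex_Icc x y)
      · intro s hs
        exact (hd2 s (lt_of_lt_of_le hx hs.1)).continuousAt.continuousWithinAt
      · intro s hs; rw [interior_Icc] at hs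
        exact (hd2 s (lt_of_lt_of_le hx hs.1.le)).hasDerivWithinAt
      · intro s hs; rw [interior_Icc] at hs
        have hs0 : 0 < s := lt_of_lt_of_le hx hs.1.le
        have h1 := (hφ'' s hs0).1
        have h2 := hsign s hs0
        nlinarith
    exact key (Set.left_mem_Icc.2 hxy) (Set.right_mem_Icc.2 hxy) hxy
  have hdbl : ∀ r : ℝ, 0 < r → φ' (2 * r) ≤ K * φ' r :=
    fun r hr => phi'_doubling φ' φ'' C₀ hd2 (fun s hs => (hφ'' s hs).2) hr
  refine ⟨1 / (8 * K), 2 * K, by positivity, by positivity, ?_⟩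
  intro a b hab
  set α := ‖a‖ with hαdef
  set β := ‖b‖ with hβdef
  set t := ‖a - b‖ with htdef
  set σ := α + β with hσdef
  have hα : 0 ≤ α := norm_nonneg a
  have hβ : 0 ≤ β := norm_nonneg b
  have htnn : 0 ≤ t := norm_nonneg _
  have hσ : 0 < σ := by
    rcases not_and_or.mp hab with h | h
    · have : 0 < α := norm_pos_iff.mpr h
      linarith
    · have : 0 < β := norm_pos_iff.mpr h
      linarith
  rcases eq_or_lt_of_le htnn with ht0 | ht
  · rw [← ht0]
    refine ⟨?_, ?_⟩ <;> simp [phiShift]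
  · have htσ : t ≤ σ := norm_sub_le a b
    have hβle : β ≤ α + t := by
      have h := norm_sub_le a (a - b)
      simpa using h
    have hαt : 0 < α + t := by linarith
    have hαt2 : 0 < α + t / 2 := by linarith
    set f := fun s => φ' (α + s) * s / (α + s) with hfdef
    have hPS : phiShift φ' α t = ∫ s in (0:ℝ)..t, f s := rfl
    have hfnn : ∀ s ∈ Set.Icc (0:ℝ) t, 0 ≤ f s := by
      intro s hs
      rcases eq_or_lt_of_le hs.1 with h0 | h0
      · simp [hfdef, ← h0]
      · exact div_nonneg (mul_nonneg (hsign _ (Set.mem_Ioi.mpr (by linarith))) h0.le)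
          (by linarith)
    have hfc : ContinuousOn f (Set.Ioc 0 t) := by
      intro s hs
      have hαs : 0 < α + s := by linarith [hs.1]
      have h1 : ContinuousAt (fun s => φ' (α + s)) s :=
        ((hd2 (α + s) (Set.mem_Ioi.mpr hαs)).continuousAt).comp
          ((continuous_const.add continuous_id).continuousAt)
      exact ((h1.mul continuousAt_id).div
        ((continuous_const.add continuous_id).continuousAt) hαs.ne').continuousWithinAt
    set M := φ' (α + t) * (t / (α + t)) with hMdef
    have hMnn : 0 ≤ M :=
      mul_nonneg (hsign _ (Set.mem_Ioi.mpr hαt)) (div_nonneg htnn hαt.le)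
    have hfleM : ∀ s ∈ Set.Icc (0:ℝ) t, f s ≤ M := by
      intro s hs
      rcases eq_or_lt_of_le hs.1 with h0 | h0
      · simpa [hfdef, ← h0] using hMnn
      · have hαs : 0 < α + s := by linarith
        have e : f s = φ' (α + s) * (s / (α + s)) := mul_div_assoc _ _ _
        rw [e, hMdef]
        apply mul_le_mul (hmono _ _ hαs (by linarith [hs.2])) ?_
          (div_nonneg h0.le hαs.le) (hsign _ (Set.mem_Ioi.mpr hαt))
        rw [div_le_div_iff₀ hαs hαt]
        nlinarith [hs.2]
    have hint : IntervalIntegrable f MeasureTheory.volume 0 t := by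
      rw [intervalIntegrable_iff_integrableOn_Ioc_of_le htnn]
      refine ⟨hfc.aestronglyMeasurable measurableSet_Ioc, ?_⟩
      apply MeasureTheory.HasFiniteIntegral.restrict_of_bounded (C := M) measure_Ioc_lt_top
      filter_upwards [MeasureTheory.ae_restrict_mem measurableSet_Ioc] with s hs
      rw [Real.norm_of_nonneg (hfnn s (Set.Ioc_subset_Icc_self hs))]
      exact hfleM s (Set.Ioc_subset_Icc_self hs)
    have hint1 : IntervalIntegrable f MeasureTheory.volume 0 (t / 2) :=
      hint.mono_set (by
        rw [Set.uIcc_of_le (by linarith), Set.uIcc_of_le htnn]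
        exact Set.Icc_subset_Icc le_rfl (by linarith))
    have hint2 : IntervalIntegrable f MeasureTheory.volume (t / 2) t :=
      hint.mono_set (by
        rw [Set.uIcc_of_le (by linarith), Set.uIcc_of_le htnn]
        exact Set.Icc_subset_Icc (by linarith) le_rfl)
    have hupper : phiShift φ' α t ≤ t * M := by
      have h := intervalIntegral.integral_mono_on htnn hint intervalIntegrable_const hfleM
      rw [intervalIntegral.integral_const, smul_eq_mul, sub_zero] at h
      rw [hPS]
      exact h.trans_eq rfl
    set m := φ' (α + t / 2) * ((t / 2) / (α + t)) with hmdef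
    have hmnn : 0 ≤ m :=
      mul_nonneg (hsign _ (Set.mem_Ioi.mpr hαt2)) (div_nonneg (by linarith) hαt.le)
    have hmlef : ∀ s ∈ Set.Icc (t / 2) t, m ≤ f s := by
      intro s hs
      have hst : t / 2 ≤ s := hs.1
      have hs0 : 0 < s := by linarith
      have hαs : 0 < α + s := by linarith
      have e : f s = φ' (α + s) * (s / (α + s)) := mul_div_assoc _ _ _
      rw [e, hmdef]
      apply mul_le_mul (hmono _ _ hαt2 (by linarith)) ?_
        (div_nonneg (by linarith) hαt.le) (hsign _ (Set.mem_Ioi.mpr hαs))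
      rw [div_le_div_iff₀ hαt hαs]
      nlinarith [hs.2]
    have hlower : t / 2 * m ≤ phiShift φ' α t := by
      have hsplit := intervalIntegral.integral_add_adjacent_intervals hint1 hint2
      have h01 : 0 ≤ ∫ s in (0:ℝ)..(t / 2), f s :=
        intervalIntegral.integral_nonneg (by linarith)
          (fun s hs => hfnn s ⟨hs.1, by linarith [hs.2]⟩)
      have h12 : (t - t / 2) * m ≤ ∫ s in (t / 2)..t, f s := by
        have h := intervalIntegral.integral_mono_on (by linarith : t / 2 ≤ t)
          intervalIntegrable_const hint2 hmlef
        rwa [intervalIntegral.integral_const, smul_eq_mul] at h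
      rw [hPS, ← hsplit]
      have e : t - t / 2 = t / 2 := by ring
      rw [e] at h12
      linarith
    have hlow2 : φ' σ ≤ K * φ' (α + t / 2) :=
      (hmono σ (2 * (α + t / 2)) hσ (by linarith)).trans (hdbl _ hαt2)
    have hup2 : φ' (α + t) ≤ K * φ' σ :=
      (hmono (α + t) (2 * σ) hαt (by linarith)).trans (hdbl _ hσ)
    have hσnn : 0 ≤ φ' σ := hsign σ (Set.mem_Ioi.mpr hσ)
    have hαtnn : 0 ≤ φ' (α + t) := hsign _ (Set.mem_Ioi.mpr hαt)
    have hαt2nn : 0 ≤ φ' (α + t / 2) := hsign _ (Set.mem_Ioi.mpr hαt2)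
    clear_value K α β t σ f M m
    constructor
    · refine le_trans ?_ hlower
      have eL : 1 / (8 * K) * (φ' σ / σ) * t ^ 2 = φ' σ * t ^ 2 / (8 * K * σ) := by
        rw [← div_div]; ring
      have eR : t / 2 * m = φ' (α + t / 2) * t ^ 2 / (4 * (α + t)) := by
        rw [hmdef, ← div_div]; ring
      rw [eL, eR, div_le_div_iff₀ (by positivity) (by positivity)]
      have A : φ' σ * (4 * (α + t)) ≤ K * φ' (α + t / 2) * (4 * (α + t)) :=
        mul_le_mul_of_nonneg_right hlow2 (by positivity)
      have B : K * φ' (α + t / 2) * (4 * (α + t)) ≤ K * φ' (α + t / 2) * (8 * σ) :=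
        mul_le_mul_of_nonneg_left (by linarith) (by positivity)
      have h := mul_le_mul_of_nonneg_right (A.trans B) (sq_nonneg t)
      calc φ' σ * t ^ 2 * (4 * (α + t)) = φ' σ * (4 * (α + t)) * t ^ 2 := by ring
        _ ≤ K * φ' (α + t / 2) * (8 * σ) * t ^ 2 := h
        _ = φ' (α + t / 2) * t ^ 2 * (8 * K * σ) := by ring
    · refine hupper.trans ?_
      have eL : t * M = φ' (α + t) * t ^ 2 / (α + t) := by
        rw [hMdef]; ring
      have eR : 2 * K * (φ' σ / σ) * t ^ 2 = 2 * K * φ' σ * t ^ 2 / σ := by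
        ring
      rw [eL, eR, div_le_div_iff₀ hαt hσ]
      have A : φ' (α + t) * σ ≤ K * φ' σ * σ :=
        mul_le_mul_of_nonneg_right hup2 hσ.le
      have B : K * φ' σ * σ ≤ K * φ' σ * (2 * (α + t)) :=
        mul_le_mul_of_nonneg_left (by linarith) (by positivity)
      have h := mul_le_mul_of_nonneg_right (A.trans B) (sq_nonneg t)
      calc φ' (α + t) * t ^ 2 * σ = φ' (α + t) * σ * t ^ 2 := by ring
        _ ≤ K * φ' σ * (2 * (α + t)) * t ^ 2 := h
        _ = 2 * K * φ' σ * t ^ 2 * (α + t) := by ring
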